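/- The homogeneity characteristic 𝐡𝐨𝐦 is at most the maximum of 𝔯_σ and the dominating number 𝔡: 𝐡𝐨𝐦 ≤ max{𝔯_σ, 𝔡}. -/
import Mathlib


open Cardinal Set Filter

/-- `H` is homogeneous for the 2-coloring `c` of pairs. -/
def Homog2 (c : Finset ℕ → Bool) (H : Set ℕ) : Prop :=
  ∃ i : Bool, ∀ a ∈ H, ∀ b ∈ H, a ≠ b → c {a, b} = i

/-- `H` is almost homogeneous for `c`: homogeneous after removing a finite subset. -/
def AlmostHomog2 (c : Finset ℕ → Bool) (H : Set ℕ) : Prop :=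
  ∃ F : Set ℕ, F.Finite ∧ F ⊆ H ∧ Homog2 c (H \ F)

/-- The homogeneity characteristic 𝐡𝐨𝐦. -/
noncomputable def homNum : Cardinal :=
  sInf {κ : Cardinal | ∃ ℋ : Set (Set ℕ), (∀ H ∈ ℋ, H.Infinite) ∧
    (∀ c : Finset ℕ → Bool, ∃ H ∈ ℋ, AlmostHomog2 c H) ∧ κ = #ℋ}

/-- `g` eventually majorizes `f`. -/
def EvMaj (g f : ℕ → ℕ) : Prop := ∀ᶠ n in Filter.atTop, f n < g n

/-- The dominating number 𝔡. -/
noncomputable def domNum : Cardinal :=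
  sInf {c : Cardinal | ∃ D : Set (ℕ → ℕ),
    (∀ f : ℕ → ℕ, ∃ g ∈ D, EvMaj g f) ∧ c = #D}

/-- `X` splits `Y`: both `X ∩ Y` and `Y \ X` are infinite. -/
def Splits (X Y : Set ℕ) : Prop := (X ∩ Y).Infinite ∧ (Y \ X).Infinite

/-- The σ-unsplitting number 𝔯_σ. -/
noncomputable def unsplitSigmaNum : Cardinal :=
  sInf {c : Cardinal | ∃ 𝒳 : Set (Set ℕ), (∀ X ∈ 𝒳, X.Infinite) ∧
    (∀ Y : ℕ → Set ℕ, ∃ X ∈ 𝒳, ∀ n : ℕ, ¬ Splits (Y n) X) ∧ c = #𝒳}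

/-- least element of `X` greater than `m` (junk if none). -/
noncomputable def nextIn (X : Set ℕ) (m : ℕ) : ℕ := sInf {k | k ∈ X ∧ m < k}

lemma nextIn_spec {X : Set ℕ} (hX : X.Infinite) (m : ℕ) :
    nextIn X m ∈ X ∧ m < nextIn X m := by
  have hne : {k | k ∈ X ∧ m < k}.Nonempty := by
    obtain ⟨b, hb, hb2⟩ := hX.exists_gt m
    exact ⟨b, hb, hb2⟩
  exact Nat.sInf_mem hne

open scoped Classical in
noncomputable def fuseChain (Y : ℕ → Set ℕ) : ℕ → Set ℕ
  | 0 => Set.univ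
  | n+1 => if (fuseChain Y n ∩ Y n).Infinite then fuseChain Y n ∩ Y n
           else fuseChain Y n \ Y n

lemma fuseChain_infinite (Y : ℕ → Set ℕ) : ∀ n, (fuseChain Y n).Infinite
  | 0 => Set.infinite_univ
  | n+1 => by
    have h := fuseChain_infinite Y n
    rw [fuseChain]
    split
    · assumption
    · rename_i hsp
      by_contra h2
      rw [Set.not_infinite] at h2 hsp
      exact h ((hsp.union h2).subset fun x hx => by
        by_cases hxy : x ∈ Y n
        · exact Or.inl ⟨hx, hxy⟩
        · exact Or.inr ⟨hx, hxy⟩)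

lemma fuseChain_succ_subset (Y : ℕ → Set ℕ) (n : ℕ) :
    fuseChain Y (n+1) ⊆ fuseChain Y n := by
  rw [fuseChain]; split
  · exact Set.inter_subset_left
  · exact Set.diff_subset

lemma fuseChain_antitone (Y : ℕ → Set ℕ) : ∀ {n m}, n ≤ m → fuseChain Y m ⊆ fuseChain Y n := by
  intro n m h
  induction m with
  | zero => simp_all
  | succ k ih =>
    rcases Nat.lt_or_ge n (k+1) with h' | h'
    · exact (fuseChain_succ_subset Y k).trans (ih (by omega))
    · have : n = k + 1 := le_antisymm h h'
      subst this; exact subset_rfl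

noncomputable def fuseSeq (Y : ℕ → Set ℕ) : ℕ → ℕ
  | 0 => nextIn (fuseChain Y 0) 0
  | n+1 => nextIn (fuseChain Y (n+1)) (fuseSeq Y n)

lemma fuseSeq_mem (Y : ℕ → Set ℕ) : ∀ n, fuseSeq Y n ∈ fuseChain Y n
  | 0 => (nextIn_spec (fuseChain_infinite Y 0) 0).1
  | n+1 => (nextIn_spec (fuseChain_infinite Y (n+1)) _).1

lemma fuseSeq_strictMono (Y : ℕ → Set ℕ) : StrictMono (fuseSeq Y) :=
  strictMono_nat_of_lt_succ fun n =>
    (nextIn_spec (fuseChain_infinite Y (n+1)) (fuseSeq Y n)).2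

lemma exists_unsplit (Y : ℕ → Set ℕ) :
    ∃ X : Set ℕ, X.Infinite ∧ ∀ n, ¬ Splits (Y n) X := by
  refine ⟨Set.range (fuseSeq Y), Set.infinite_range_of_injective (fuseSeq_strictMono Y).injective, ?_⟩
  intro n hsp
  have hsub : ∀ m, n + 1 ≤ m → fuseSeq Y m ∈ fuseChain Y (n+1) := fun m hm =>
    fuseChain_antitone Y hm (fuseSeq_mem Y m)
  have hfin : ∀ (S : Set ℕ), (∀ x ∈ S, ∃ m, fuseSeq Y m = x ∧ m < n + 1) → S.Finite := by
    intro S hS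
    apply (Set.finite_Iio (n+1)).image (fuseSeq Y) |>.subset
    intro x hx
    obtain ⟨m, hm1, hm2⟩ := hS x hx
    exact ⟨m, hm2, hm1⟩
  rw [fuseChain] at hsub
  split at hsub
  · exact hsp.2 (hfin _ (by
      rintro x ⟨⟨m, rfl⟩, hxy⟩
      refine ⟨m, rfl, ?_⟩
      by_contra hm
      exact hxy (hsub m (by omega)).2))
  · exact hsp.1 (hfin _ (by
      rintro x ⟨hxy, m, rfl⟩
      refine ⟨m, rfl, ?_⟩
      by_contra hm
      exact (hsub m (by omega)).2 hxy))
noncomputable def sparseSeq (X' : Set ℕ) (g : ℕ → ℕ) : ℕ → ℕ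
  | 0 => nextIn X' 0
  | t+1 => nextIn X' (max (sparseSeq X' g t) (g (sparseSeq X' g t)))

lemma sparseSeq_mem {X' : Set ℕ} (hX' : X'.Infinite) (g : ℕ → ℕ) :
    ∀ t, sparseSeq X' g t ∈ X'
  | 0 => (nextIn_spec hX' 0).1
  | t+1 => (nextIn_spec hX' _).1

lemma sparseSeq_succ_gt {X' : Set ℕ} (hX' : X'.Infinite) (g : ℕ → ℕ) (t : ℕ) :
    max (sparseSeq X' g t) (g (sparseSeq X' g t)) < sparseSeq X' g (t+1) :=
  (nextIn_spec hX' _).2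

lemma sparseSeq_strictMono {X' : Set ℕ} (hX' : X'.Infinite) (g : ℕ → ℕ) :
    StrictMono (sparseSeq X' g) :=
  strictMono_nat_of_lt_succ fun t =>
    lt_of_le_of_lt (le_max_left _ _) (sparseSeq_succ_gt hX' g t)

/-- The candidate almost-homogeneous sets. -/
noncomputable def Hdef (X X' : Set ℕ) (g : ℕ → ℕ) : Set ℕ :=
  Set.range (fun t => Nat.nth (· ∈ X) (sparseSeq X' g t))

lemma Hdef_infinite {X X' : Set ℕ} (hX : X.Infinite) (hX' : X'.Infinite) (g : ℕ → ℕ) :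
    (Hdef X X' g).Infinite := by
  have hX2 : {m | m ∈ X}.Infinite := by simpa using hX
  exact Set.infinite_range_of_injective
    ((Nat.nth_strictMono hX2).comp (sparseSeq_strictMono hX' g)).injective

lemma dom_witness_infinite {D : Set (ℕ → ℕ)} (hD : ∀ f : ℕ → ℕ, ∃ g ∈ D, EvMaj g f) :
    D.Infinite := by
  by_contra hni
  rw [Set.not_infinite] at hni
  have hfin := hni
  obtain ⟨g, hgD, hg⟩ := hD (fun n => (hfin.toFinset.sup fun g => g n) + 1)
  obtain ⟨n, hn⟩ := hg.exists
  have hn' : (hfin.toFinset.sup fun g => g n) + 1 < g n := hn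
  have h2 : g n ≤ hfin.toFinset.sup fun g => g n :=
    Finset.le_sup (f := fun g => g n) (hfin.mem_toFinset.mpr hgD)
  exact absurd ((Nat.lt_of_succ_lt hn').trans_le h2) (lt_irrefl _)
lemma Hdef_almostHomog {X X' : Set ℕ} (hX : X.Infinite) (hX' : X'.Infinite)
    (c : Finset ℕ → Bool) (iCol : ℕ → Bool) (f g : ℕ → ℕ) (j : Bool) (N M : ℕ)
    (hf : ∀ n m, m ∈ X → f n ≤ m → c {n, m} = iCol n)
    (hjN : ∀ k, k ∈ X' → N ≤ k → iCol (Nat.nth (· ∈ X) k) = j)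
    (hM : ∀ k, M ≤ k → f (Nat.nth (· ∈ X) k) < g k) :
    AlmostHomog2 c (Hdef X X' g) := by
  have hXset : {m | m ∈ X}.Infinite := by simpa using hX
  have heMono : StrictMono (Nat.nth (· ∈ X)) := Nat.nth_strictMono hXset
  have heMem : ∀ k, Nat.nth (· ∈ X) k ∈ X := fun k => Nat.nth_mem_of_infinite hXset k
  have hsMono : StrictMono (sparseSeq X' g) := sparseSeq_strictMono hX' g
  have hsMem : ∀ t, sparseSeq X' g t ∈ X' := sparseSeq_mem hX' g
  have hsle : ∀ t, t ≤ sparseSeq X' g t := fun t => hsMono.le_apply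
  refine ⟨(fun t => Nat.nth (· ∈ X) (sparseSeq X' g t)) '' Set.Iio (max N M),
    (Set.finite_Iio _).image _, Set.image_subset_range _ _, j, ?_⟩
  have main : ∀ t u, max N M ≤ t → t < u →
      c {Nat.nth (· ∈ X) (sparseSeq X' g t), Nat.nth (· ∈ X) (sparseSeq X' g u)} = j := by
    intro t u ht htu
    have h1 : iCol (Nat.nth (· ∈ X) (sparseSeq X' g t)) = j :=
      hjN _ (hsMem t) (le_trans (le_trans (le_max_left N M) ht) (hsle t))
    have h2 : f (Nat.nth (· ∈ X) (sparseSeq X' g t)) < g (sparseSeq X' g t) :=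
      hM _ (le_trans (le_trans (le_max_right N M) ht) (hsle t))
    have h3 : g (sparseSeq X' g t) < sparseSeq X' g (t + 1) :=
      lt_of_le_of_lt (le_max_right _ _) (sparseSeq_succ_gt hX' g t)
    have h4 : sparseSeq X' g (t + 1) ≤ sparseSeq X' g u := hsMono.monotone (by omega)
    have h5 : sparseSeq X' g u ≤ Nat.nth (· ∈ X) (sparseSeq X' g u) := heMono.le_apply
    have hfb : f (Nat.nth (· ∈ X) (sparseSeq X' g t)) ≤ Nat.nth (· ∈ X) (sparseSeq X' g u) := by
      omega
    exact (hf _ _ (heMem _) hfb).trans h1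
  intro a ha b hb hab
  obtain ⟨t, rfl⟩ := ha.1
  obtain ⟨u, rfl⟩ := hb.1
  have ht : max N M ≤ t := by
    by_contra h
    push_neg at h
    exact ha.2 (Set.mem_image_of_mem _ (Set.mem_Iio.mpr h))
  have hu : max N M ≤ u := by
    by_contra h
    push_neg at h
    exact hb.2 (Set.mem_image_of_mem _ (Set.mem_Iio.mpr h))
  have htu : t ≠ u := by rintro rfl; exact hab rfl
  rcases lt_or_gt_of_ne htu with h | h
  · exact main t u ht h
  · rw [Finset.pair_comm]
    exact main u t hu h

theorem homNum_le_max : homNum ≤ max unsplitSigmaNum domNum := by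
  classical
  have hUne : {c : Cardinal | ∃ 𝒳 : Set (Set ℕ), (∀ X ∈ 𝒳, X.Infinite) ∧
      (∀ Y : ℕ → Set ℕ, ∃ X ∈ 𝒳, ∀ n : ℕ, ¬ Splits (Y n) X) ∧ c = #𝒳}.Nonempty := by
    refine ⟨#{X : Set ℕ | X.Infinite}, {X : Set ℕ | X.Infinite}, fun X hX => hX, ?_, rfl⟩
    intro Y
    obtain ⟨X, hX1, hX2⟩ := exists_unsplit Y
    exact ⟨X, hX1, hX2⟩
  obtain ⟨𝒳, h𝒳inf, h𝒳uns, h𝒳card⟩ :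
      ∃ 𝒳 : Set (Set ℕ), (∀ X ∈ 𝒳, X.Infinite) ∧
        (∀ Y : ℕ → Set ℕ, ∃ X ∈ 𝒳, ∀ n : ℕ, ¬ Splits (Y n) X) ∧ unsplitSigmaNum = #𝒳 :=
    csInf_mem hUne
  have hDne : {c : Cardinal | ∃ D : Set (ℕ → ℕ),
      (∀ f : ℕ → ℕ, ∃ g ∈ D, EvMaj g f) ∧ c = #D}.Nonempty := by
    refine ⟨#(Set.univ : Set (ℕ → ℕ)), Set.univ, fun f => ⟨fun n => f n + 1, trivial, ?_⟩, rfl⟩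
    exact Filter.Eventually.of_forall fun n => Nat.lt_succ_self _
  obtain ⟨D, hDdom, hDcard⟩ :
      ∃ D : Set (ℕ → ℕ), (∀ f : ℕ → ℕ, ∃ g ∈ D, EvMaj g f) ∧ domNum = #D :=
    csInf_mem hDne
  have hκ0 : ℵ₀ ≤ max unsplitSigmaNum domNum := by
    refine le_max_of_le_right ?_
    rw [hDcard]
    exact Cardinal.infinite_iff.mp (Set.infinite_coe_iff.mpr (dom_witness_infinite hDdom))
  have hcard : #(Set.range (fun p : ↥𝒳 × ↥𝒳 × ↥D => Hdef p.1.1 p.2.1.1 p.2.2.1) : Set (Set ℕ))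
      ≤ max unsplitSigmaNum domNum := by
    refine le_trans Cardinal.mk_range_le ?_
    have heq : #(↥𝒳 × ↥𝒳 × ↥D) = #↥𝒳 * (#↥𝒳 * #↥D) := by
      simp [Cardinal.mk_prod]
    rw [heq]
    have h1 : #↥𝒳 ≤ max unsplitSigmaNum domNum := by
      rw [← h𝒳card]; exact le_max_left _ _
    have h2 : #↥D ≤ max unsplitSigmaNum domNum := by
      rw [← hDcard]; exact le_max_right _ _
    have h3 : #↥𝒳 * #↥D ≤ max unsplitSigmaNum domNum :=
      (Cardinal.mul_le_max _ _).trans (sup_le (sup_le h1 h2) hκ0)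
    exact (Cardinal.mul_le_max _ _).trans (sup_le (sup_le h1 h3) hκ0)
  refine le_trans (csInf_le' ?_) hcard
  refine ⟨Set.range (fun p : ↥𝒳 × ↥𝒳 × ↥D => Hdef p.1.1 p.2.1.1 p.2.2.1), ?_, ?_, rfl⟩
  · rintro H ⟨⟨⟨X, hX⟩, ⟨X', hX'⟩, ⟨g, hg⟩⟩, rfl⟩
    exact Hdef_infinite (h𝒳inf X hX) (h𝒳inf X' hX') g
  intro c
  set Y : ℕ → Set ℕ := fun n => {m | m ≠ n ∧ c {n, m} = true} with hY
  obtain ⟨X, hX𝒳, hXuns⟩ := h𝒳uns Y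
  have hXi : X.Infinite := h𝒳inf X hX𝒳
  have key : ∀ n : ℕ, ∃ B : ℕ, ∀ m, m ∈ X → B ≤ m →
      c {n, m} = (if (X \ Y n).Finite then true else false) := by
    intro n
    by_cases h : (X \ Y n).Finite
    · obtain ⟨B, hB⟩ := h.bddAbove
      refine ⟨max B n + 1, fun m hm hBm => ?_⟩
      rw [if_pos h]
      have hmY : m ∈ Y n := by
        by_contra hmy
        have hle : m ≤ B := hB ⟨hm, hmy⟩
        omega
      exact hmY.2
    · have h2 : (Y n ∩ X).Finite := by
        rcases not_and_or.mp (hXuns n) with h1 | h1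
        · exact Set.not_infinite.mp h1
        · exact absurd (Set.not_infinite.mp h1) h
      obtain ⟨B, hB⟩ := h2.bddAbove
      refine ⟨max B n + 1, fun m hm hBm => ?_⟩
      rw [if_neg h]
      by_contra hc
      rw [Bool.not_eq_false] at hc
      have hmY : m ∈ Y n := ⟨by omega, hc⟩
      have hle : m ≤ B := hB ⟨hmY, hm⟩
      omega
  choose f hf using key
  obtain ⟨X', hX'𝒳, hX'uns⟩ := h𝒳uns
    (fun _ => {k | (if (X \ Y (Nat.nth (· ∈ X) k)).Finite then true else false) = true})
  have hX'i : X'.Infinite := h𝒳inf X' hX'𝒳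
  have key2 : ∃ j : Bool, ∃ N : ℕ, ∀ k, k ∈ X' → N ≤ k →
      (if (X \ Y (Nat.nth (· ∈ X) k)).Finite then true else false) = j := by
    rcases not_and_or.mp (hX'uns 0) with h1 | h1
    · have hfin := Set.not_infinite.mp h1
      obtain ⟨B, hB⟩ := hfin.bddAbove
      refine ⟨false, B + 1, fun k hk hkB => ?_⟩
      by_contra hc
      rw [Bool.not_eq_false] at hc
      have hle : k ≤ B := hB ⟨hc, hk⟩
      omega
    · have hfin := Set.not_infinite.mp h1
      obtain ⟨B, hB⟩ := hfin.bddAbove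
      refine ⟨true, B + 1, fun k hk hkB => ?_⟩
      by_contra hc
      rw [Bool.not_eq_true] at hc
      have hT : k ∉ {k | (if (X \ Y (Nat.nth (· ∈ X) k)).Finite then true else false) = true} := by
        simp only [Set.mem_setOf_eq, hc]
        exact Bool.false_ne_true
      have hle : k ≤ B := hB ⟨hk, hT⟩
      omega
  obtain ⟨j, N, hjN⟩ := key2
  obtain ⟨g, hgD, hg⟩ := hDdom (fun k => f (Nat.nth (· ∈ X) k))
  obtain ⟨M, hM⟩ := Filter.eventually_atTop.mp hg
  refine ⟨Hdef X X' g, ⟨⟨⟨X, hX𝒳⟩, ⟨X', hX'𝒳⟩, ⟨g, hgD⟩⟩, rfl⟩, ?_⟩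
  exact Hdef_almostHomog hXi hX'i c
    (fun n => if (X \ Y n).Finite then true else false) f g j N M hf hjN hM
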